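/- arXiv:1903.10240 — 6 statements merged into one kernel-verified Lean document; each statement's English description precedes it below -/
import Mathlib

section
/- For every pair of integers r ≥ 2 and k with 1 ≤ k ≤ r, there exist integers χ₁, χ₂ and a polarization (w₁, w₂) (rational numbers with 0 < w₁ < 1, 0 < w₂ < 1, w₁ + w₂ = 1) such that, setting χ = χ₁ + χ₂ − r, the numerical conditions χ·w₁ ≤ χ₁ ≤ χ·w₁ + k and χ·w₂ + r − k ≤ χ₂ ≤ χ·w₂ + r hold. In other words, the set W_{r,k} ⊆ ℤ² of pairs (χ₁, χ₂) admitting such a polarization is nonempty. -/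
/-- A polarization is a pair of rationals `(w₁, w₂)` with `0 < wᵢ < 1` and `w₁ + w₂ = 1`. -/
def IsPolarization (w₁ w₂ : ℚ) : Prop :=
  0 < w₁ ∧ w₁ < 1 ∧ 0 < w₂ ∧ w₂ < 1 ∧ w₁ + w₂ = 1

/-- The numerical conditions for `(r, k, χ₁, χ₂)` with respect to `(w₁, w₂)`,
where `χ = χ₁ + χ₂ - r`. -/
def NumericalConditions (r k χ₁ χ₂ : ℤ) (w₁ w₂ : ℚ) : Prop :=
  ((χ₁ + χ₂ - r : ℤ) : ℚ) * w₁ ≤ (χ₁ : ℚ) ∧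
  (χ₁ : ℚ) ≤ ((χ₁ + χ₂ - r : ℤ) : ℚ) * w₁ + (k : ℚ) ∧
  ((χ₁ + χ₂ - r : ℤ) : ℚ) * w₂ + (r : ℚ) - (k : ℚ) ≤ (χ₂ : ℚ) ∧
  (χ₂ : ℚ) ≤ ((χ₁ + χ₂ - r : ℤ) : ℚ) * w₂ + (r : ℚ)

/-- Lemma 3.4: the set `W_{r,k}` of pairs `(χ₁, χ₂)` admitting a polarization satisfying the
numerical conditions is nonempty. -/
theorem W_rk_nonempty (r k : ℤ) (hr : 2 ≤ r) (hk1 : 1 ≤ k) (hkr : k ≤ r) :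
    ∃ χ₁ χ₂ : ℤ, ∃ w₁ w₂ : ℚ,
      IsPolarization w₁ w₂ ∧ NumericalConditions r k χ₁ χ₂ w₁ w₂ := by
  have hkq : (1:ℚ) ≤ (k:ℚ) := by exact_mod_cast hk1
  refine ⟨0, r, 1/2, 1/2, ⟨by norm_num, by norm_num, by norm_num, by norm_num, by norm_num⟩,
    ?_, ?_, ?_, ?_⟩ <;> push_cast <;> ring_nf <;> linarith
end

section
/- Let r ≥ 2 and 1 ≤ k ≤ r be integers and let χ₁, χ₂ be integers such that χ := χ₁ + χ₂ − r > 0. Then there exists a polarization (w₁, w₂) (rational numbers with 0 < wᵢ < 1 and w₁ + w₂ = 1) satisfying χ·w₁ ≤ χ₁ ≤ χ·w₁ + k and χ·w₂ + r − k ≤ χ₂ ≤ χ·w₂ + r, if and only if χ₁ > 0 and χ₂ > r − k. -/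
/-- The case `χ > 0` in the proof of Lemma 3.4: a suitable polarization exists iff
`χ₁ > 0` and `χ₂ > r - k`. -/
theorem existence_polarization_pos_chi (r k χ₁ χ₂ : ℤ) (hr : 2 ≤ r)
    (hk1 : 1 ≤ k) (hkr : k ≤ r) (hχ : 0 < χ₁ + χ₂ - r) :
    (∃ w₁ w₂ : ℚ, IsPolarization w₁ w₂ ∧ NumericalConditions r k χ₁ χ₂ w₁ w₂) ↔
      (0 < χ₁ ∧ r - k < χ₂) := by
  have hχQ : (0:ℚ) < ((χ₁ + χ₂ - r : ℤ) : ℚ) := by exact_mod_cast hχ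
  set c : ℚ := ((χ₁ + χ₂ - r : ℤ) : ℚ) with hc
  have hcdef : c = (χ₁:ℚ) + χ₂ - r := by rw [hc]; push_cast; ring
  constructor
  · rintro ⟨w₁, w₂, ⟨h0, h1, h2, h3, hsum⟩, hc1, hc2, hc3, hc4⟩
    constructor
    · have : (0:ℚ) < (χ₁:ℚ) := lt_of_lt_of_le (mul_pos hχQ h0) hc1
      exact_mod_cast this
    · have : ((r:ℚ) - k) < (χ₂:ℚ) := by nlinarith [mul_pos hχQ h2]
      exact_mod_cast this
  · rintro ⟨h1, h2⟩
    have hQ1 : (0:ℚ) < (χ₁:ℚ) := by exact_mod_cast h1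
    have hQ2 : ((r:ℚ) - k) < (χ₂:ℚ) := by exact_mod_cast (show (r - k : ℤ) < χ₂ from h2)
    have hkQ : (1:ℚ) ≤ (k:ℚ) := by exact_mod_cast hk1
    set a : ℚ := ((χ₁:ℚ) - k) / c with ha
    set b : ℚ := (χ₁:ℚ) / c with hb
    have hab : a ≤ b := by
      rw [ha, hb, div_le_div_iff_of_pos_right hχQ]
      linarith
    have hb0 : 0 < b := div_pos hQ1 hχQ
    have ha1 : a < 1 := by
      rw [ha, div_lt_one hχQ, hcdef]; linarith
    set L : ℚ := max a 0 with hL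
    set U : ℚ := min b 1 with hU
    have hLU : L ≤ U := max_le (le_min hab (le_of_lt ha1)) (le_min (le_of_lt hb0) zero_le_one)
    have hU0 : 0 < U := lt_min hb0 zero_lt_one
    have hL1 : L < 1 := max_lt ha1 zero_lt_one
    refine ⟨(L + U) / 2, 1 - (L + U) / 2, ⟨?_, ?_, ?_, ?_, by ring⟩, ?_, ?_, ?_, ?_⟩
    · have : 0 ≤ L := le_max_right a 0
      linarith
    · have : U ≤ 1 := min_le_right b 1
      linarith
    · have : U ≤ 1 := min_le_right b 1
      linarith
    · have : 0 ≤ L := le_max_right a 0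
      linarith
    · have hw : (L + U) / 2 ≤ b := by
        have : U ≤ b := min_le_left b 1
        linarith
      rw [hb, le_div_iff₀ hχQ] at hw
      linarith
    · have hw : a ≤ (L + U) / 2 := by
        have : a ≤ L := le_max_left a 0
        linarith
      rw [ha, div_le_iff₀ hχQ] at hw
      linarith
    · have hw : a ≤ (L + U) / 2 := by
        have : a ≤ L := le_max_left a 0
        linarith
      rw [ha, div_le_iff₀ hχQ] at hw
      rw [hcdef] at hw
      push_cast
      nlinarith
    · have hw : (L + U) / 2 ≤ b := by
        have : U ≤ b := min_le_left b 1
        linarith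
      rw [hb, le_div_iff₀ hχQ] at hw
      rw [hcdef] at hw
      push_cast
      nlinarith
end

section
/- Let r ≥ 2 and 1 ≤ k ≤ r be integers and let χ₁, χ₂ be integers such that χ := χ₁ + χ₂ − r < 0. Then there exists a polarization (w₁, w₂) (rational numbers with 0 < wᵢ < 1 and w₁ + w₂ = 1) satisfying χ·w₁ ≤ χ₁ ≤ χ·w₁ + k and χ·w₂ + r − k ≤ χ₂ ≤ χ·w₂ + r, if and only if χ₁ < k and χ₂ < r. -/
/-- The case `χ < 0` in the proof of Lemma 3.4: a suitable polarization exists iff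
`χ₁ < k` and `χ₂ < r`. -/
theorem existence_polarization_neg_chi (r k χ₁ χ₂ : ℤ) (hr : 2 ≤ r)
    (hk1 : 1 ≤ k) (hkr : k ≤ r) (hχ : χ₁ + χ₂ - r < 0) :
    (∃ w₁ w₂ : ℚ, IsPolarization w₁ w₂ ∧ NumericalConditions r k χ₁ χ₂ w₁ w₂) ↔
      (χ₁ < k ∧ χ₂ < r) := by
  have hχq : ((χ₁ + χ₂ - r : ℤ) : ℚ) < 0 := by exact_mod_cast hχ
  constructor
  · rintro ⟨w₁, w₂, ⟨h1, h2, h3, h4, h5⟩, ⟨c1, c2, c3, c4⟩⟩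
    have hm1 : ((χ₁ + χ₂ - r : ℤ) : ℚ) * w₁ < 0 := mul_neg_of_neg_of_pos hχq h1
    have hm2 : ((χ₁ + χ₂ - r : ℤ) : ℚ) * w₂ < 0 := mul_neg_of_neg_of_pos hχq h3
    constructor
    · have : (χ₁ : ℚ) < (k : ℚ) := by linarith
      exact_mod_cast this
    · have : (χ₂ : ℚ) < (r : ℚ) := by linarith
      exact_mod_cast this
  · rintro ⟨h1, h2⟩
    have h1q : (χ₁ : ℚ) < (k : ℚ) := by exact_mod_cast h1
    have h2q : (χ₂ : ℚ) < (r : ℚ) := by exact_mod_cast h2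
    set χq : ℚ := ((χ₁ + χ₂ - r : ℤ) : ℚ) with hχdef
    have hcast : χq = (χ₁ : ℚ) + (χ₂ : ℚ) - (r : ℚ) := by push_cast [hχdef]; ring
    have hk1q : (1 : ℚ) ≤ (k : ℚ) := by exact_mod_cast hk1
    set L : ℚ := max ((χ₁ : ℚ) - (k : ℚ)) χq with hL
    set U : ℚ := min (χ₁ : ℚ) 0 with hU
    have hLU : L < U := by
      rw [hL, hU]
      apply max_lt <;> apply lt_min <;> linarith
    set t : ℚ := (L + U) / 2 with ht
    have htL : L < t := by rw [ht]; linarith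
    have htU : t < U := by rw [ht]; linarith
    have hχt : χq < t := lt_of_le_of_lt (le_max_right _ _) htL
    have ht0 : t < 0 := lt_of_lt_of_le htU (min_le_right _ _)
    have ht1 : t ≤ (χ₁ : ℚ) := le_of_lt (lt_of_lt_of_le htU (min_le_left _ _))
    have ht2 : (χ₁ : ℚ) - (k : ℚ) ≤ t := le_of_lt (lt_of_le_of_lt (le_max_left _ _) htL)
    refine ⟨t / χq, 1 - t / χq, ?_, ?_⟩
    · have hmul : χq * (t / χq) = t := mul_div_cancel₀ t (ne_of_lt hχq)
      have hw1 : 0 < t / χq := div_pos_of_neg_of_neg ht0 hχq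
      have hw2 : t / χq < 1 := by nlinarith
      exact ⟨hw1, hw2, by linarith, by linarith, by ring⟩
    · have hmul : χq * (t / χq) = t := mul_div_cancel₀ t (ne_of_lt hχq)
      have hmul2 : χq * (1 - t / χq) = χq - t := by rw [mul_sub, hmul, mul_one]
      refine ⟨?_, ?_, ?_, ?_⟩ <;> rw [← hχdef]
      · rw [hmul]; exact ht1
      · rw [hmul]; linarith
      · rw [hmul2]; linarith [hcast]
      · rw [hmul2]; linarith [hcast]
end

section
/- Let r ≥ 2 be an integer and let χ₁, χ₂ be integers with χ = χ₁ + χ₂ − r. If there exists a polarization (w₁, w₂) satisfying the numerical conditions for (r, 1, χ₁, χ₂) (i.e. χ·w₁ ≤ χ₁ ≤ χ·w₁ + 1 and χ·w₂ + r − 1 ≤ χ₂ ≤ χ·w₂ + r), then there exists a single polarization (w₁, w₂) which satisfies the numerical conditions for (r, k, χ₁, χ₂) simultaneously for every integer k with 1 ≤ k ≤ r. -/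
/-- Remark 3.5: if `(χ₁, χ₂) ∈ W_{r,1}`, then a single polarization satisfies the numerical
conditions for every `k` with `1 ≤ k ≤ r`. -/
theorem one_polarization_for_all_k (r χ₁ χ₂ : ℤ) (hr : 2 ≤ r)
    (h : ∃ w₁ w₂ : ℚ, IsPolarization w₁ w₂ ∧ NumericalConditions r 1 χ₁ χ₂ w₁ w₂) :
    ∃ w₁ w₂ : ℚ, IsPolarization w₁ w₂ ∧
      ∀ k : ℤ, 1 ≤ k → k ≤ r → NumericalConditions r k χ₁ χ₂ w₁ w₂ := by
  obtain ⟨w₁, w₂, hpol, h1, h2, h3, h4⟩ := h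
  refine ⟨w₁, w₂, hpol, fun k hk _ => ⟨h1, ?_, ?_, h4⟩⟩
  · have : (1 : ℚ) ≤ (k : ℚ) := by exact_mod_cast hk
    push_cast at h2 ⊢
    linarith
  · have : (1 : ℚ) ≤ (k : ℚ) := by exact_mod_cast hk
    push_cast at h3 ⊢
    linarith
end

section
/- Let r ≥ 2 and 1 ≤ k ≤ r − 1 be integers, let g₁, g₂ ≥ 1 and d₁, d₂ be integers, and set χ₁ = d₁ + r·(1 − g₁), χ₂ = d₂ + r·(1 − g₂), χ = χ₁ + χ₂ − r. Let (w₁, w₂) be a polarization (rationals with 0 < wᵢ < 1, w₁ + w₂ = 1) satisfying χ₁ ≤ χ·w₁ + k and χ₂ ≤ χ·w₂ + r. Let s₁, s₂, s, a₁, a₂ be integers with 1 ≤ s₁ ≤ r, 1 ≤ s₂ ≤ r, 0 ≤ s ≤ min(s₁, s₂), r·a₁ ≤ s₁·(d₁ − k) and r·a₂ ≤ s₂·(d₂ − 2r). Then (a₁ + s₁·(1 − g₁) + a₂ + s₂·(1 − g₂) + s) / (w₁·s₁ + w₂·s₂) ≤ χ / r. -/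
/-- The numerical core of the proof of Proposition 3.7: the `w`-slope of a depth one subsheaf
is bounded above by `χ/r`. -/
theorem prop37_slope_bound (r k g₁ g₂ d₁ d₂ : ℤ) (hr : 2 ≤ r) (hk1 : 1 ≤ k)
    (hkr : k ≤ r - 1) (hg₁ : 1 ≤ g₁) (hg₂ : 1 ≤ g₂)
    (χ₁ χ₂ χ : ℤ) (hχ₁ : χ₁ = d₁ + r * (1 - g₁)) (hχ₂ : χ₂ = d₂ + r * (1 - g₂))
    (hχ : χ = χ₁ + χ₂ - r)
    (w₁ w₂ : ℚ) (hpol : IsPolarization w₁ w₂)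
    (hcond₁ : (χ₁ : ℚ) ≤ (χ : ℚ) * w₁ + (k : ℚ))
    (hcond₂ : (χ₂ : ℚ) ≤ (χ : ℚ) * w₂ + (r : ℚ))
    (s₁ s₂ s a₁ a₂ : ℤ) (hs₁1 : 1 ≤ s₁) (hs₁r : s₁ ≤ r) (hs₂1 : 1 ≤ s₂) (hs₂r : s₂ ≤ r)
    (hs0 : 0 ≤ s) (hss : s ≤ min s₁ s₂)
    (ha₁ : r * a₁ ≤ s₁ * (d₁ - k)) (ha₂ : r * a₂ ≤ s₂ * (d₂ - 2 * r)) :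
    ((a₁ : ℚ) + (s₁ : ℚ) * (1 - (g₁ : ℚ)) + (a₂ : ℚ) + (s₂ : ℚ) * (1 - (g₂ : ℚ)) + (s : ℚ)) /
      (w₁ * (s₁ : ℚ) + w₂ * (s₂ : ℚ)) ≤ (χ : ℚ) / (r : ℚ) := by
  obtain ⟨hw₁, hw₁', hw₂, hw₂', hw⟩ := hpol
  have hs2 : s ≤ s₂ := le_trans hss (min_le_right _ _)
  have hrQ : (0:ℚ) < (r:ℚ) := by exact_mod_cast lt_of_lt_of_le (by norm_num) hr
  have hs₁Q : (1:ℚ) ≤ (s₁:ℚ) := by exact_mod_cast hs₁1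
  have hs₂Q : (1:ℚ) ≤ (s₂:ℚ) := by exact_mod_cast hs₂1
  have hsQ : (s:ℚ) ≤ (s₂:ℚ) := by exact_mod_cast hs2
  have ha₁Q : (r:ℚ) * a₁ ≤ s₁ * ((d₁:ℚ) - k) := by exact_mod_cast ha₁
  have ha₂Q : (r:ℚ) * a₂ ≤ s₂ * ((d₂:ℚ) - 2 * r) := by exact_mod_cast ha₂
  have hχ₁Q : (χ₁:ℚ) = (d₁:ℚ) + r * (1 - g₁) := by exact_mod_cast hχ₁
  have hχ₂Q : (χ₂:ℚ) = (d₂:ℚ) + r * (1 - g₂) := by exact_mod_cast hχ₂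
  have hχQ : (χ:ℚ) = (χ₁:ℚ) + χ₂ - r := by exact_mod_cast hχ
  have hD : 0 < w₁ * (s₁:ℚ) + w₂ * (s₂:ℚ) := by nlinarith
  rw [div_le_div_iff₀ hD hrQ]
  nlinarith [mul_le_mul_of_nonneg_left hcond₁ (le_trans zero_le_one hs₁Q),
    mul_le_mul_of_nonneg_left hcond₂ (le_trans zero_le_one hs₂Q)]
end

section
/- Let r ≥ 2 and 1 ≤ k ≤ r − 1 be integers, let g₁, g₂ ≥ 1 and d₁, d₂ be integers, and set χ₁ = d₁ + r·(1 − g₁), χ₂ = d₂ + r·(1 − g₂), χ = χ₁ + χ₂ − r. Let (w₁, w₂) be a polarization (rationals with 0 < wᵢ < 1, w₁ + w₂ = 1) satisfying χ₁ ≤ χ·w₁ + k and χ₂ ≤ χ·w₂ + r. Let s₁, s₂, s, a₁, a₂ be integers with 1 ≤ s₁ ≤ r, 1 ≤ s₂ ≤ r, 0 ≤ s ≤ min(s₁, s₂), r·a₁ ≤ s₁·(d₁ − k) and r·a₂ ≤ s₂·(d₂ − 2r). If moreover at least one of the two inequalities r·a₁ < s₁·(d₁ − k) or r·a₂ < s₂·(d₂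 − 2r) is strict, then (a₁ + s₁·(1 − g₁) + a₂ + s₂·(1 − g₂) + s) / (w₁·s₁ + w₂·s₂) < χ / r. -/
/-- The strict-inequality refinement in the proof of Proposition 3.7: if one of the degree
bounds is strict, the `w`-slope of the subsheaf is strictly less than `χ/r`. -/
theorem prop37_slope_bound_strict (r k g₁ g₂ d₁ d₂ : ℤ) (hr : 2 ≤ r) (hk1 : 1 ≤ k)
    (hkr : k ≤ r - 1) (hg₁ : 1 ≤ g₁) (hg₂ : 1 ≤ g₂)
    (χ₁ χ₂ χ : ℤ) (hχ₁ : χ₁ = d₁ + r * (1 - g₁)) (hχ₂ : χ₂ = d₂ + r * (1 - g₂))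
    (hχ : χ = χ₁ + χ₂ - r)
    (w₁ w₂ : ℚ) (hpol : IsPolarization w₁ w₂)
    (hcond₁ : (χ₁ : ℚ) ≤ (χ : ℚ) * w₁ + (k : ℚ))
    (hcond₂ : (χ₂ : ℚ) ≤ (χ : ℚ) * w₂ + (r : ℚ))
    (s₁ s₂ s a₁ a₂ : ℤ) (hs₁1 : 1 ≤ s₁) (hs₁r : s₁ ≤ r) (hs₂1 : 1 ≤ s₂) (hs₂r : s₂ ≤ r)
    (hs0 : 0 ≤ s) (hss : s ≤ min s₁ s₂)
    (ha₁ : r * a₁ ≤ s₁ * (d₁ - k)) (ha₂ : r * a₂ ≤ s₂ * (d₂ - 2 * r))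
    (hstrict : r * a₁ < s₁ * (d₁ - k) ∨ r * a₂ < s₂ * (d₂ - 2 * r)) :
    ((a₁ : ℚ) + (s₁ : ℚ) * (1 - (g₁ : ℚ)) + (a₂ : ℚ) + (s₂ : ℚ) * (1 - (g₂ : ℚ)) + (s : ℚ)) /
      (w₁ * (s₁ : ℚ) + w₂ * (s₂ : ℚ)) < (χ : ℚ) / (r : ℚ) := by
  obtain ⟨hw1, hw1', hw2, hw2', hsum⟩ := hpol
  have hs₁' : (1 : ℚ) ≤ (s₁ : ℚ) := by exact_mod_cast hs₁1
  have hs₂' : (1 : ℚ) ≤ (s₂ : ℚ) := by exact_mod_cast hs₂1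
  have hr' : (0 : ℚ) < (r : ℚ) := by exact_mod_cast (by omega : (0:ℤ) < r)
  have hD : (0 : ℚ) < w₁ * (s₁ : ℚ) + w₂ * (s₂ : ℚ) := by nlinarith
  rw [div_lt_div_iff₀ hD hr']
  have hss₂ : (s : ℚ) ≤ (s₂ : ℚ) := by
    exact_mod_cast le_trans hss (min_le_right _ _)
  -- cast degree bounds
  have ha₁' : (r : ℚ) * a₁ ≤ (s₁ : ℚ) * ((d₁ : ℚ) - k) := by exact_mod_cast ha₁
  have ha₂' : (r : ℚ) * a₂ ≤ (s₂ : ℚ) * ((d₂ : ℚ) - 2 * r) := by exact_mod_cast ha₂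
  have hχ₁' : (χ₁ : ℚ) = (d₁ : ℚ) + (r : ℚ) * (1 - (g₁ : ℚ)) := by exact_mod_cast hχ₁
  have hχ₂' : (χ₂ : ℚ) = (d₂ : ℚ) + (r : ℚ) * (1 - (g₂ : ℚ)) := by exact_mod_cast hχ₂
  have hχ' : (χ : ℚ) = (χ₁ : ℚ) + (χ₂ : ℚ) - (r : ℚ) := by exact_mod_cast hχ
  -- key consequences of the polarization conditions
  have key₁ : (s₁ : ℚ) * ((χ₁ : ℚ) - k) ≤ (s₁ : ℚ) * ((χ : ℚ) * w₁) := by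
    apply mul_le_mul_of_nonneg_left (by linarith) (by linarith)
  have key₂ : (s₂ : ℚ) * ((χ₂ : ℚ) - r) ≤ (s₂ : ℚ) * ((χ : ℚ) * w₂) := by
    apply mul_le_mul_of_nonneg_left (by linarith) (by linarith)
  rcases hstrict with h | h
  · have h' : (r : ℚ) * a₁ < (s₁ : ℚ) * ((d₁ : ℚ) - k) := by exact_mod_cast h
    nlinarith [key₁, key₂, ha₂', h', hss₂, hr']
  · have h' : (r : ℚ) * a₂ < (s₂ : ℚ) * ((d₂ : ℚ) - 2 * r) := by exact_mod_cast h
    nlinarith [key₁, key₂, ha₁', h', hss₂, hr']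
end
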